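/- Correctness of the reduction from punctual reachability games to periodically declining temporal reachability games: let G = (V, E) be a static game with V partitioned into V₁, V₂, let v ∈ V₁ be the target vertex and T ∈ ℕ the target time, and set K = T+1. Define the temporal game G' on V' = V ∪ {w, ⊤, ⊥} (fresh vertices) with V'₁ = V₁ ∪ {w, ⊤, ⊥} and V'₂ = V₂, and K-periodic edge availabilities, described via r = x mod K: for (s,t) ∈ E with s ∈ V₁, s →_x t iff r < T; for every s ∈ V₁ ∖ {v}, s →_x ⊥ at all times; for (s,t) ∈ E with s ∈ V₂, s →_x t at all times; for every s ∈ V₂, s →_x ⊥ iff r = T; v →_x w at all times; w →_x ⊥ at all times; w →_x ⊤ iff r = 0; ⊤ and ⊥ have no outgoing edges. Then the edge relation of G' is K-periodic, the game restricted to one period is declining, and for every u ∈ V: Player 1 wins the temporal reachability game on G' with target set {⊤} from position (u, 0) if and only if Player 1 wins the punctual reachability game on G with target vertex v and target time T from u. -/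

import Mathlib

/-!
A temporal graph: vertex set `V`, time-indexed edge relation `E t u v` (edge from `u` to `v`
available at time `t`).  `P1 v` means vertex `v` is controlled by Player 1.  A play from
position `(u,k)` is a maximal sequence of positions `(v₀,k), (v₁,k+1), …` following available
edges, where the owner of the current vertex chooses the next one; the play halts at a
position whose owner has no available edge.

`P1WinsReach E P1 F u k` : Player 1 wins the reachability game with target set `F` from
position `(u, k)`, i.e. she has a strategy (assigning to each position `(v,t)` with `v ∈ V₁`
that has at least one available edge an available successor) such that every maximal play
from `(u,k)` consistent with it — infinite, or halting at a position with no available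
edge — visits `F`.
-/
def P1WinsReach {V : Type*} (E : ℕ → V → V → Prop) (P1 : V → Prop) (F : Set V)
    (u : V) (k : ℕ) : Prop :=
  ∃ σ : V → ℕ → V,
    (∀ (v : V) (t : ℕ), k ≤ t → P1 v → (∃ w, E t v w) → E t v (σ v t)) ∧
    (∀ ρ : ℕ → V, ρ 0 = u →
      (∀ i, E (k + i) (ρ i) (ρ (i + 1))) →
      (∀ i, P1 (ρ i) → ρ (i + 1) = σ (ρ i) (k + i)) →
      ∃ i, ρ i ∈ F) ∧
    (∀ (ρ : ℕ → V) (n : ℕ), ρ 0 = u →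
      (∀ i < n, E (k + i) (ρ i) (ρ (i + 1))) →
      (∀ i < n, P1 (ρ i) → ρ (i + 1) = σ (ρ i) (k + i)) →
      (∀ w, ¬ E (k + n) (ρ n) w) →
      ∃ i ≤ n, ρ i ∈ F)

/-!
`PunctualWins Es P1 v T u` : in the punctual reachability game on the static game with
edge relation `Es` (Player-1 vertices given by `P1`), target vertex `v` and target time
`T`, Player 1 wins from `u`: she has a strategy (assigning to each position `(s,t)` with
`s ∈ V₁` that has an outgoing edge one of its successors) such that every maximal play
from `u` at time `0` consistent with it — infinite, or halting at a vertex with no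
outgoing edge — visits `v` at time exactly `T`.
-/
def PunctualWins {V : Type*} (Es : V → V → Prop) (P1 : V → Prop) (v : V) (T : ℕ)
    (u : V) : Prop :=
  ∃ σ : V → ℕ → V,
    (∀ (s : V) (t : ℕ), P1 s → (∃ w, Es s w) → Es s (σ s t)) ∧
    (∀ ρ : ℕ → V, ρ 0 = u →
      (∀ i, Es (ρ i) (ρ (i + 1))) →
      (∀ i, P1 (ρ i) → ρ (i + 1) = σ (ρ i) i) →
      ρ T = v) ∧
    (∀ (ρ : ℕ → V) (n : ℕ), ρ 0 = u →
      (∀ i < n, Es (ρ i) (ρ (i + 1))) →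
      (∀ i < n, P1 (ρ i) → ρ (i + 1) = σ (ρ i) i) →
      (∀ w, ¬ Es (ρ n) w) →
      T ≤ n ∧ ρ T = v)

/-!
Reduction from a punctual reachability game on a static game `G = (V, Es)` with target
vertex `v ∈ V₁` and target time `T` to a reachability game on a periodically declining
temporal graph `G'` with period `K = T + 1`.  The vertex set of `G'` is `V ⊕ Fin 3`, with
the three fresh vertices `w = Sum.inr 0`, `⊤ = Sum.inr 1`, `⊥ = Sum.inr 2`.

`K`-periodic edge availabilities (`perE`), described via `r = x % K`:
for `(s,t) ∈ E` with `s ∈ V₁`, `s →_x t` iff `r < T`;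
for every `s ∈ V₁ \ {v}`, `s →_x ⊥` at all times;
for `(s,t) ∈ E` with `s ∈ V₂`, `s →_x t` at all times;
for every `s ∈ V₂`, `s →_x ⊥` iff `r = T`;
`v →_x w` at all times;  `w →_x ⊥` at all times;  `w →_x ⊤` iff `r = 0`;
`⊤` and `⊥` have no outgoing edges.

Ownership (`perP1`): `V'₁ = V₁ ∪ {w, ⊤, ⊥}` and `V'₂ = V₂`.

"The game restricted to one period is declining" is formalized as: the game on the finite
temporal graph obtained from `G'` by freezing the edge relation from the end of the first
period onwards (edge relation `fun x => perE … (min x T)`) is declining.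
-/
def perE {V : Type*} (Es : V → V → Prop) (P1 : V → Prop) (v : V) (T : ℕ) :
    ℕ → (V ⊕ Fin 3) → (V ⊕ Fin 3) → Prop := fun x a b =>
  match a, b with
  | Sum.inl s, Sum.inl t => Es s t ∧ ((P1 s ∧ x % (T + 1) < T) ∨ ¬ P1 s)
  | Sum.inl s, Sum.inr j =>
      (s = v ∧ j = (0 : Fin 3)) ∨
      (j = (2 : Fin 3) ∧ ((P1 s ∧ s ≠ v) ∨ (¬ P1 s ∧ x % (T + 1) = T)))
  | Sum.inr j, Sum.inr j' =>
      j = (0 : Fin 3) ∧ (j' = (2 : Fin 3) ∨ (j' = (1 : Fin 3) ∧ x % (T + 1) = 0))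
  | Sum.inr _, Sum.inl _ => False

def perP1 {V : Type*} (P1 : V → Prop) : (V ⊕ Fin 3) → Prop := fun a =>
  match a with
  | Sum.inl s => P1 s
  | Sum.inr _ => True


section Reduction

variable {V : Type*} {Es : V → V → Prop} {P1 : V → Prop} {v : V} {T : ℕ}

lemma perE_ll {x : ℕ} {s t : V} :
    perE Es P1 v T x (Sum.inl s) (Sum.inl t) ↔
      Es s t ∧ ((P1 s ∧ x % (T + 1) < T) ∨ ¬ P1 s) := Iff.rfl

lemma perE_lr {x : ℕ} {s : V} {j : Fin 3} :
    perE Es P1 v T x (Sum.inl s) (Sum.inr j) ↔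
      (s = v ∧ j = (0 : Fin 3)) ∨
      (j = (2 : Fin 3) ∧ ((P1 s ∧ s ≠ v) ∨ (¬ P1 s ∧ x % (T + 1) = T))) := Iff.rfl

lemma perE_rr {x : ℕ} {j j' : Fin 3} :
    perE Es P1 v T x (Sum.inr j) (Sum.inr j') ↔
      j = (0 : Fin 3) ∧ (j' = (2 : Fin 3) ∨ (j' = (1 : Fin 3) ∧ x % (T + 1) = 0)) := Iff.rfl

lemma perE_rl {x : ℕ} {j : Fin 3} {s : V} :
    ¬ perE Es P1 v T x (Sum.inr j) (Sum.inl s) := fun h => h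

lemma perE_no_one {x : ℕ} {b : V ⊕ Fin 3} : ¬ perE Es P1 v T x (Sum.inr 1) b := by
  cases b with
  | inl s => exact perE_rl
  | inr j => intro h; exact absurd (perE_rr.mp h).1 (by decide)

lemma perE_no_two {x : ℕ} {b : V ⊕ Fin 3} : ¬ perE Es P1 v T x (Sum.inr 2) b := by
  cases b with
  | inl s => exact perE_rl
  | inr j => intro h; exact absurd (perE_rr.mp h).1 (by decide)

lemma perE_w_bot {x : ℕ} : perE Es P1 v T x (Sum.inr 0) (Sum.inr 2) :=
  perE_rr.mpr ⟨rfl, Or.inl rfl⟩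

lemma mod_self_eq : T % (T + 1) = T := Nat.mod_eq_of_lt (Nat.lt_succ_self T)


open Classical in
noncomputable def fwdStrat (Es : V → V → Prop) (P1 : V → Prop) (v : V) (T : ℕ)
    (σ : V → ℕ → V) : (V ⊕ Fin 3) → ℕ → (V ⊕ Fin 3) := fun a t =>
  match a with
  | Sum.inl s => if t % (T + 1) < T ∧ ∃ w', Es s w' then Sum.inl (σ s t)
      else if s = v then Sum.inr 0 else Sum.inr 2
  | Sum.inr _ => if t % (T + 1) = 0 then Sum.inr 1 else Sum.inr 2

open Classical in
lemma fwdStrat_inl (σ : V → ℕ → V) (s : V) (t : ℕ) :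
    fwdStrat Es P1 v T σ (Sum.inl s) t =
      if t % (T + 1) < T ∧ ∃ w', Es s w' then Sum.inl (σ s t)
      else if s = v then Sum.inr 0 else Sum.inr 2 := rfl

open Classical in
lemma fwdStrat_inr (σ : V → ℕ → V) (j : Fin 3) (t : ℕ) :
    fwdStrat Es P1 v T σ (Sum.inr j) t =
      if t % (T + 1) = 0 then Sum.inr 1 else Sum.inr 2 := rfl

/-- Any `σ`-consistent prefix of length at least `T` visits `v` at time `T`,
provided `σ` is a winning punctual strategy. -/
lemma punctual_prefix {u : V} {σ : V → ℕ → V}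
    (hσ1 : ∀ (s : V) (t : ℕ), P1 s → (∃ w, Es s w) → Es s (σ s t))
    (hσ2 : ∀ ρ : ℕ → V, ρ 0 = u → (∀ i, Es (ρ i) (ρ (i + 1))) →
      (∀ i, P1 (ρ i) → ρ (i + 1) = σ (ρ i) i) → ρ T = v)
    (hσ3 : ∀ (ρ : ℕ → V) (n : ℕ), ρ 0 = u → (∀ i < n, Es (ρ i) (ρ (i + 1))) →
      (∀ i < n, P1 (ρ i) → ρ (i + 1) = σ (ρ i) i) → (∀ w, ¬ Es (ρ n) w) →
      T ≤ n ∧ ρ T = v)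
    (ρ : ℕ → V) (m : ℕ) (h0 : ρ 0 = u)
    (hE : ∀ i < m, Es (ρ i) (ρ (i + 1)))
    (hc : ∀ i < m, P1 (ρ i) → ρ (i + 1) = σ (ρ i) i)
    (hTm : T ≤ m) : ρ T = v := by
  classical
  set nxt : V → ℕ → V := fun s t => if P1 s then σ s t
      else if h : ∃ w, Es s w then h.choose else s with hnxt
  set g : ℕ → V := fun k => Nat.rec (ρ m) (fun k ih => nxt ih (m + k)) k with hg
  set ext : ℕ → V := fun i => if i ≤ m then ρ i else g (i - m) with hextdef
  have hext_le : ∀ i, i ≤ m → ext i = ρ i := by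
    intro i h; simp only [hextdef]; rw [if_pos h]
  have hext_g : ∀ i, m ≤ i → ext i = g (i - m) := by
    intro i h
    rcases eq_or_lt_of_le h with h' | h'
    · simp only [hextdef]
      rw [if_pos (le_of_eq h'.symm), ← h', Nat.sub_self]
      rfl
    · simp only [hextdef]; rw [if_neg (by omega)]
  have hgs : ∀ k, g (k + 1) = nxt (g k) (m + k) := fun k => rfl
  have hext_gt : ∀ i, m ≤ i → ext (i + 1) = nxt (ext i) i := by
    intro i h
    rw [hext_g (i + 1) (by omega), hext_g i h,
      show i + 1 - m = (i - m) + 1 by omega, hgs, show m + (i - m) = i by omega]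
  have hextE : ∀ i, (∃ w, Es (ext i) w) →
      Es (ext i) (ext (i + 1)) ∧ (P1 (ext i) → ext (i + 1) = σ (ext i) i) := by
    intro i hex
    rcases lt_or_ge i m with h | h
    · rw [hext_le i (le_of_lt h), hext_le (i + 1) h]
      exact ⟨hE i h, hc i h⟩
    · rw [hext_gt i h]
      constructor
      · by_cases hp : P1 (ext i)
        · simp only [hnxt]; rw [if_pos hp]; exact hσ1 _ i hp hex
        · simp only [hnxt]; rw [if_neg hp, dif_pos hex]; exact hex.choose_spec
      · intro hp; simp only [hnxt]; rw [if_pos hp]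
  have hext0 : ext 0 = u := by rw [hext_le 0 (Nat.zero_le m)]; exact h0
  by_cases hinf : ∀ i, ∃ w, Es (ext i) w
  · have hT := hσ2 ext hext0
      (fun i => (hextE i (hinf i)).1) (fun i hp => (hextE i (hinf i)).2 hp)
    rw [hext_le T hTm] at hT; exact hT
  · push_neg at hinf
    have hn'spec : ∀ w, ¬ Es (ext (Nat.find hinf)) w := Nat.find_spec hinf
    have hn'min : ∀ i, i < Nat.find hinf → ∃ w, Es (ext i) w := by
      intro i hi
      have := Nat.find_min hinf hi
      push_neg at this; exact this
    have h3 := hσ3 ext (Nat.find hinf) hext0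
      (fun i hi => (hextE i (hn'min i hi)).1)
      (fun i hi hp => (hextE i (hn'min i hi)).2 hp)
      hn'spec
    rw [hext_le T hTm] at h3
    exact h3.2

lemma fwd (hv : P1 v) (u : V) (hwin : PunctualWins Es P1 v T u) :
    P1WinsReach (perE Es P1 v T) (perP1 P1) {Sum.inr (1 : Fin 3)} (Sum.inl u) 0 := by
  classical
  obtain ⟨σ, hσ1, hσ2, hσ3⟩ := hwin
  have hTnlt : ∀ s : V, ¬ (T % (T + 1) < T ∧ ∃ w', Es s w') := by
    intro s hc; rw [mod_self_eq] at hc; exact lt_irrefl T hc.1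
  refine ⟨fwdStrat Es P1 v T σ, ?_, ?_, ?_⟩
  · -- validity
    rintro (s | j) t - hP1 hex
    · by_cases hcnd : t % (T + 1) < T ∧ ∃ w', Es s w'
      · rw [fwdStrat_inl, if_pos hcnd]
        exact perE_ll.mpr ⟨hσ1 s t hP1 hcnd.2, Or.inl ⟨hP1, hcnd.1⟩⟩
      · by_cases hsv : s = v
        · rw [fwdStrat_inl, if_neg hcnd, if_pos hsv]
          exact perE_lr.mpr (Or.inl ⟨hsv, rfl⟩)
        · rw [fwdStrat_inl, if_neg hcnd, if_neg hsv]
          exact perE_lr.mpr (Or.inr ⟨rfl, Or.inl ⟨hP1, hsv⟩⟩)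
    · obtain ⟨b, hb⟩ := hex
      have hj : j = 0 := by
        rcases b with s | j'
        · exact absurd hb perE_rl
        · exact (perE_rr.mp hb).1
      subst hj
      by_cases h0' : t % (T + 1) = 0
      · rw [fwdStrat_inr, if_pos h0']
        exact perE_rr.mpr ⟨rfl, Or.inr ⟨rfl, h0'⟩⟩
      · rw [fwdStrat_inr, if_neg h0']
        exact perE_w_bot
  · -- infinite plays
    intro ρ' h0 hedge hcons
    exfalso
    simp only [Nat.zero_add] at hedge hcons
    have hall : ∀ i, ∃ s, ρ' i = Sum.inl s := by
      intro i
      induction i with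
      | zero => exact ⟨u, h0⟩
      | succ i ih =>
        obtain ⟨s, hs⟩ := ih
        cases h1 : ρ' (i + 1) with
        | inl t => exact ⟨t, rfl⟩
        | inr j =>
          exfalso
          have hedge1 := hedge (i + 1)
          rw [h1] at hedge1
          cases h2 : ρ' (i + 1 + 1) with
          | inl t' => rw [h2] at hedge1; exact perE_rl hedge1
          | inr j' =>
            rw [h2] at hedge1
            have hedge2 := hedge (i + 1 + 1)
            rw [h2] at hedge2
            rcases (perE_rr.mp hedge1).2 with h' | h'
            · rw [h'] at hedge2; exact perE_no_two hedge2
            · rw [h'.1] at hedge2; exact perE_no_one hedge2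
    choose ρ hρ using hall
    have hρ0 : ρ 0 = u := by
      have := hρ 0; rw [h0] at this; exact (Sum.inl.inj this).symm
    have hEs : ∀ i, Es (ρ i) (ρ (i + 1)) := by
      intro i
      have h := hedge i; rw [hρ i, hρ (i + 1)] at h
      exact (perE_ll.mp h).1
    have hconsV : ∀ i, P1 (ρ i) → ρ (i + 1) = σ (ρ i) i := by
      intro i hp
      have hc := hcons i (by rw [hρ i]; exact hp)
      rw [hρ i, hρ (i + 1), fwdStrat_inl] at hc
      by_cases hcnd : i % (T + 1) < T ∧ ∃ w', Es (ρ i) w'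
      · rw [if_pos hcnd] at hc; exact Sum.inl.inj hc
      · rw [if_neg hcnd] at hc
        split_ifs at hc <;> exact absurd hc (by simp)
    have hT := hσ2 ρ hρ0 hEs hconsV
    have hcT := hcons T (by rw [hρ T, hT]; exact hv)
    rw [hρ T, hρ (T + 1), hT, fwdStrat_inl, if_neg (hTnlt v), if_pos rfl] at hcT
    exact absurd hcT (by simp)
  · -- finite plays
    intro ρ' n h0 hedge hcons hstuck
    simp only [Nat.zero_add] at hedge hcons hstuck
    set ρ : ℕ → V := fun i => Sum.elim id (fun _ : Fin 3 => u) (ρ' i) with hρdef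
    have hρ : ∀ i s, ρ' i = Sum.inl s → ρ i = s := by
      intro i s h; simp only [hρdef, h, Sum.elim_inl, id]
    have hρ0 : ρ 0 = u := hρ 0 u h0
    by_cases hall : ∀ i ≤ n, ∃ s, ρ' i = Sum.inl s
    · exfalso
      have hEs : ∀ i < n, Es (ρ i) (ρ (i + 1)) := by
        intro i hi
        obtain ⟨s, hs⟩ := hall i (le_of_lt hi)
        obtain ⟨t, ht⟩ := hall (i + 1) hi
        have h := hedge i hi; rw [hs, ht] at h
        rw [hρ i s hs, hρ (i + 1) t ht]
        exact (perE_ll.mp h).1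
      have hconsV : ∀ i < n, P1 (ρ i) → ρ (i + 1) = σ (ρ i) i := by
        intro i hi hp
        obtain ⟨s, hs⟩ := hall i (le_of_lt hi)
        obtain ⟨t, ht⟩ := hall (i + 1) hi
        have hc := hcons i hi (by rw [hs, ← hρ i s hs]; exact hp)
        rw [hs, ht, fwdStrat_inl] at hc
        rw [hρ i s hs, hρ (i + 1) t ht]
        by_cases hcnd : i % (T + 1) < T ∧ ∃ w', Es s w'
        · rw [if_pos hcnd] at hc; exact Sum.inl.inj hc
        · rw [if_neg hcnd] at hc
          split_ifs at hc <;> exact absurd hc (by simp)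
      obtain ⟨s, hs⟩ := hall n le_rfl
      have hρn := hρ n s hs
      have hsv : s ≠ v := by
        intro h
        exact hstuck (Sum.inr 0) (by rw [hs]; exact perE_lr.mpr (Or.inl ⟨h, rfl⟩))
      have hsP : ¬ P1 s := by
        intro h
        exact hstuck (Sum.inr 2)
          (by rw [hs]; exact perE_lr.mpr (Or.inr ⟨rfl, Or.inl ⟨h, hsv⟩⟩))
      have hnoEs : ∀ w, ¬ Es (ρ n) w := by
        intro w hw
        rw [hρn] at hw
        exact hstuck (Sum.inl w) (by rw [hs]; exact perE_ll.mpr ⟨hw, Or.inr hsP⟩)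
      obtain ⟨hTn, hTv⟩ := hσ3 ρ n hρ0 hEs hconsV hnoEs
      have hTln : T < n := by
        rcases eq_or_lt_of_le hTn with h | h
        · exfalso; rw [← h] at hρn; exact hsv (hρn.symm.trans hTv)
        · exact h
      obtain ⟨t1, ht1⟩ := hall (T + 1) hTln
      obtain ⟨tv, htv⟩ := hall T (le_of_lt hTln)
      have htvv : tv = v := (hρ T tv htv).symm.trans hTv
      have hcT := hcons T hTln (by rw [htv]; exact htvv ▸ hv)
      rw [ht1, htv, htvv, fwdStrat_inl, if_neg (hTnlt v), if_pos rfl] at hcT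
      exact absurd hcT (by simp)
    · push_neg at hall
      obtain ⟨i0, hi0n, hi0⟩ := hall
      have hQ : ∃ i, ∃ j : Fin 3, ρ' i = Sum.inr j := by
        refine ⟨i0, ?_⟩
        cases h : ρ' i0 with
        | inl s => exact absurd h (hi0 s)
        | inr j => exact ⟨j, rfl⟩
      obtain ⟨j, hj⟩ := Nat.find_spec hQ
      have hmin : ∀ i, i < Nat.find hQ → ∃ s, ρ' i = Sum.inl s := by
        intro i hi
        have hni := Nat.find_min hQ hi
        cases h : ρ' i with
        | inl s => exact ⟨s, rfl⟩
        | inr j' => exact absurd ⟨j', h⟩ hni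
      have hmn : Nat.find hQ ≤ n := by
        refine le_trans (Nat.find_min' hQ ?_) hi0n
        cases h : ρ' i0 with
        | inl s => exact absurd h (hi0 s)
        | inr j' => exact ⟨j', rfl⟩
      have hm0 : 0 < Nat.find hQ := by
        rcases Nat.eq_zero_or_pos (Nat.find hQ) with h | h
        · exfalso; rw [h, h0] at hj; exact Sum.inl_ne_inr hj
        · exact h
      obtain ⟨m1, hm1⟩ : ∃ m1, Nat.find hQ = m1 + 1 :=
        ⟨Nat.find hQ - 1, (Nat.succ_pred_eq_of_pos hm0).symm⟩
      rw [hm1] at hj hmin hmn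
      obtain ⟨s, hsm⟩ := hmin m1 (Nat.lt_succ_self m1)
      have hρm1 := hρ m1 s hsm
      have hedgem := hedge m1 (by omega)
      rw [hsm, hj] at hedgem
      -- punctual prefix facts up to m1
      have hEs : ∀ i < m1, Es (ρ i) (ρ (i + 1)) := by
        intro i hi
        obtain ⟨s', hs'⟩ := hmin i (by omega)
        obtain ⟨t', ht'⟩ := hmin (i + 1) (by omega)
        have h := hedge i (by omega); rw [hs', ht'] at h
        rw [hρ i s' hs', hρ (i + 1) t' ht']
        exact (perE_ll.mp h).1
      have hconsV : ∀ i < m1, P1 (ρ i) → ρ (i + 1) = σ (ρ i) i := by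
        intro i hi hp
        obtain ⟨s', hs'⟩ := hmin i (by omega)
        obtain ⟨t', ht'⟩ := hmin (i + 1) (by omega)
        have hc := hcons i (by omega) (by rw [hs', ← hρ i s' hs']; exact hp)
        rw [hs', ht', fwdStrat_inl] at hc
        rw [hρ i s' hs', hρ (i + 1) t' ht']
        by_cases hcnd : i % (T + 1) < T ∧ ∃ w', Es s' w'
        · rw [if_pos hcnd] at hc; exact Sum.inl.inj hc
        · rw [if_neg hcnd] at hc
          split_ifs at hc <;> exact absurd hc (by simp)
      have happ3 : (∀ w, ¬ Es (ρ m1) w) → T ≤ m1 ∧ ρ T = v := fun h =>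
        hσ3 ρ m1 hρ0 hEs hconsV h
      have hlate : ρ T = v → T + 1 ≤ m1 → False := by
        intro hTv hTle
        obtain ⟨t1, ht1⟩ := hmin (T + 1) (by omega)
        obtain ⟨tv, htv⟩ := hmin T (by omega)
        have htvv : tv = v := (hρ T tv htv).symm.trans hTv
        have hcT := hcons T (by omega) (by rw [htv]; exact htvv ▸ hv)
        rw [ht1, htv, htvv, fwdStrat_inl, if_neg (hTnlt v), if_pos rfl] at hcT
        exact Sum.inl_ne_inr hcT
      rcases perE_lr.mp hedgem with ⟨hsv, hj0⟩ | ⟨hj2, hC⟩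
      · -- reached w
        subst hj0
        have hmltn : m1 + 1 < n := by
          rcases lt_or_eq_of_le hmn with h | h
          · exact h
          · exfalso
            rw [h] at hj
            exact hstuck (Sum.inr 2) (by rw [hj]; exact perE_w_bot)
        have hPs : P1 s := hsv ▸ hv
        have hcm := hcons m1 (by omega) (by rw [hsm]; exact hPs)
        rw [hj, hsm, fwdStrat_inl] at hcm
        have hmod : m1 % (T + 1) = T := by
          by_cases hcnd : m1 % (T + 1) < T ∧ ∃ w', Es s w'
          · rw [if_pos hcnd] at hcm; exact absurd hcm (by simp)
          · by_cases hB : ∃ w', Es s w'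
            · have h1 : ¬ m1 % (T + 1) < T := fun hA => hcnd ⟨hA, hB⟩
              have h2 : m1 % (T + 1) < T + 1 := Nat.mod_lt _ (by omega)
              omega
            · have h3 := happ3 (fun w hw => hB ⟨w, by rwa [hρm1] at hw⟩)
              rcases eq_or_lt_of_le h3.1 with h | h
              · rw [← h, mod_self_eq]
              · exact absurd h3.2 (fun hvv => hlate hvv h)
        have hm0mod : (m1 + 1) % (T + 1) = 0 := by
          rw [Nat.add_mod, hmod]
          rcases Nat.eq_zero_or_pos T with hT | hT
          · subst hT; simp
          · rw [Nat.mod_eq_of_lt (by omega : 1 < T + 1)]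
            exact Nat.mod_self _
        have hcm1 := hcons (m1 + 1) hmltn (by rw [hj]; trivial)
        rw [hj, fwdStrat_inr, if_pos hm0mod] at hcm1
        exact ⟨m1 + 1 + 1, by omega, by rw [hcm1]; rfl⟩
      · -- reached ⊥
        exfalso
        subst hj2
        have hTlv : T ≤ m1 → ρ T = v → False := by
          intro hTm1 hTv
          rcases eq_or_lt_of_le hTm1 with h | h
          · rw [h] at hTv
            have hsv' : s = v := hρm1.symm.trans hTv
            rcases hC with ⟨_, hne⟩ | ⟨hnp, _⟩
            · exact hne hsv'
            · exact hnp (hsv' ▸ hv)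
          · exact hlate hTv h
        rcases hC with ⟨hPs, hne⟩ | ⟨hnP, hmod⟩
        · have hcm := hcons m1 (by omega) (by rw [hsm]; exact hPs)
          rw [hj, hsm, fwdStrat_inl] at hcm
          by_cases hB : ∃ w', Es s w'
          · have hnc : ¬ (m1 % (T + 1) < T ∧ ∃ w', Es s w') := by
              intro hcnd; rw [if_pos hcnd] at hcm; exact Sum.inr_ne_inl hcm
            have hmod : m1 % (T + 1) = T := by
              have h1 : ¬ m1 % (T + 1) < T := fun hA => hnc ⟨hA, hB⟩
              have h2 : m1 % (T + 1) < T + 1 := Nat.mod_lt _ (by omega)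
              omega
            have hTm1 : T ≤ m1 := hmod ▸ Nat.mod_le m1 (T + 1)
            exact hTlv hTm1 (punctual_prefix hσ1 hσ2 hσ3 ρ m1 hρ0 hEs hconsV hTm1)
          · have h3 := happ3 (fun w hw => hB ⟨w, by rwa [hρm1] at hw⟩)
            exact hTlv h3.1 h3.2
        · have hTm1 : T ≤ m1 := hmod ▸ Nat.mod_le m1 (T + 1)
          exact hTlv hTm1 (punctual_prefix hσ1 hσ2 hσ3 ρ m1 hρ0 hEs hconsV hTm1)

open Classical in
noncomputable def bwdStrat (Es : V → V → Prop) (T : ℕ)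
    (σ' : (V ⊕ Fin 3) → ℕ → (V ⊕ Fin 3)) (u : V) : V → ℕ → V := fun s t =>
  if h1 : ∃ w, Es s w then
    (if t < T then
      (match σ' (Sum.inl s) t with
        | Sum.inl w => w
        | Sum.inr _ => h1.choose)
    else h1.choose)
  else u

open Classical in
lemma bwdStrat_eq (σ' : (V ⊕ Fin 3) → ℕ → (V ⊕ Fin 3)) (u : V) (s : V) (t : ℕ) :
    bwdStrat Es T σ' u s t =
      if h1 : ∃ w, Es s w then
        (if t < T then
          (match σ' (Sum.inl s) t with
            | Sum.inl w => w
            | Sum.inr _ => h1.choose)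
        else h1.choose)
      else u := rfl

lemma bwd (hv : P1 v) (u : V)
    (hwin : P1WinsReach (perE Es P1 v T) (perP1 P1) {Sum.inr (1 : Fin 3)} (Sum.inl u) 0) :
    PunctualWins Es P1 v T u := by
  classical
  obtain ⟨σ', hσ'1, hσ'2, hσ'3⟩ := hwin
  -- existence of a temporal edge out of any P1 vertex
  have hexP1 : ∀ (s : V) (t : ℕ), P1 s → ∃ b, perE Es P1 v T t (Sum.inl s) b := by
    intro s t hp
    by_cases hsv : s = v
    · exact ⟨Sum.inr 0, perE_lr.mpr (Or.inl ⟨hsv, rfl⟩)⟩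
    · exact ⟨Sum.inr 2, perE_lr.mpr (Or.inr ⟨rfl, Or.inl ⟨hp, hsv⟩⟩)⟩
  have hval : ∀ (s : V) (t : ℕ), P1 s →
      perE Es P1 v T t (Sum.inl s) (σ' (Sum.inl s) t) :=
    fun s t hp => hσ'1 (Sum.inl s) t (Nat.zero_le t) hp (hexP1 s t hp)
  -- at times with nonzero remainder, w's strategy move is ⊥
  have hwbot : ∀ t, t % (T + 1) ≠ 0 → σ' (Sum.inr 0) t = Sum.inr 2 := by
    intro t ht
    have h := hσ'1 (Sum.inr 0) t (Nat.zero_le t) trivial ⟨Sum.inr 2, perE_w_bot⟩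
    cases hh : σ' (Sum.inr 0) t with
    | inl s => rw [hh] at h; exact absurd h perE_rl
    | inr j' =>
      rw [hh] at h
      rcases (perE_rr.mp h).2 with h2 | ⟨_, h0⟩
      · rw [h2]
      · exact absurd h0 ht
  -- punctual strategy validity
  have cond1 : ∀ (s : V) (t : ℕ), P1 s → (∃ w, Es s w) →
      Es s (bwdStrat Es T σ' u s t) := by
    intro s t hp hex
    rw [bwdStrat_eq, dif_pos hex]
    by_cases ht : t < T
    · rw [if_pos ht]
      cases hh : σ' (Sum.inl s) t with
      | inl w =>
        have h := hval s t hp; rw [hh] at h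
        simp only [hh]
        exact (perE_ll.mp h).1
      | inr j => simp only [hh]; exact hex.choose_spec
    · rw [if_neg ht]; exact hex.choose_spec
  -- a temporal play staying in V that halts at a stuck V-vertex contradicts σ'
  have hτstuck : ∀ (ρ : ℕ → V) (p : ℕ), ρ 0 = u →
      (∀ i < p, perE Es P1 v T i (Sum.inl (ρ i)) (Sum.inl (ρ (i + 1)))) →
      (∀ i < p, P1 (ρ i) → σ' (Sum.inl (ρ i)) i = Sum.inl (ρ (i + 1))) →
      (∀ b, ¬ perE Es P1 v T p (Sum.inl (ρ p)) b) → False := by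
    intro ρ p h0 hE hc hstuck
    obtain ⟨i, hip, hmem⟩ := hσ'3 (fun k => Sum.inl (ρ k)) p
      (show Sum.inl (ρ 0) = Sum.inl u by rw [h0])
      (fun i hi => by rw [Nat.zero_add]; exact hE i hi)
      (fun i hi hp => by rw [Nat.zero_add]; exact (hc i hi hp).symm)
      (fun b => by rw [Nat.zero_add]; exact hstuck b)
    exact Sum.inl_ne_inr hmem
  -- a temporal play staying in V for p steps then exiting to w or ⊥ at a
  -- "non-winning" time contradicts σ'
  have hτgen : ∀ (ρ : ℕ → V) (p : ℕ) (e : Fin 3), ρ 0 = u →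
      (∀ i < p, perE Es P1 v T i (Sum.inl (ρ i)) (Sum.inl (ρ (i + 1)))) →
      (∀ i < p, P1 (ρ i) → σ' (Sum.inl (ρ i)) i = Sum.inl (ρ (i + 1))) →
      perE Es P1 v T p (Sum.inl (ρ p)) (Sum.inr e) →
      (P1 (ρ p) → σ' (Sum.inl (ρ p)) p = Sum.inr e) →
      (e = 0 → (p + 1) % (T + 1) ≠ 0) →
      False := by
    intro ρ p e h0 hE hc hend hcend hne0
    have hee : e = 0 ∨ e = 2 := by
      rcases perE_lr.mp hend with ⟨_, h⟩ | ⟨h, _⟩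
      · exact Or.inl h
      · exact Or.inr h
    set τ : ℕ → V ⊕ Fin 3 := fun k =>
      if k ≤ p then Sum.inl (ρ k) else if k = p + 1 then Sum.inr e else Sum.inr 2
      with hτdef
    have hτle : ∀ k, k ≤ p → τ k = Sum.inl (ρ k) := by
      intro k h; simp only [hτdef]; rw [if_pos h]
    have hτp1 : τ (p + 1) = Sum.inr e := by
      simp only [hτdef]
      rw [if_neg (show ¬ p + 1 ≤ p by omega)]
      simp
    have hτp2 : τ (p + 1 + 1) = Sum.inr 2 := by
      simp only [hτdef]
      rw [if_neg (show ¬ p + 1 + 1 ≤ p by omega),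
        if_neg (show ¬ p + 1 + 1 = p + 1 by omega)]
    have hτ0 : τ 0 = Sum.inl u := by rw [hτle 0 (Nat.zero_le p), h0]
    rcases hee with he | he
    · -- exit to w, then forced to ⊥
      subst he
      have hw := hwbot (p + 1) (hne0 rfl)
      obtain ⟨i, hip, hmem⟩ := hσ'3 τ (p + 1 + 1) hτ0
        (by
          intro i hi
          rw [Nat.zero_add]
          rcases Nat.lt_succ_iff_lt_or_eq.mp hi with hi | rfl
          · rcases Nat.lt_succ_iff_lt_or_eq.mp hi with hi | rfl
            · rw [hτle i (by omega), hτle (i + 1) (by omega)]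
              exact hE i hi
            · rw [hτle i le_rfl, hτp1]
              exact hend
          · rw [hτp1, hτp2]
            exact perE_w_bot)
        (by
          intro i hi hpi
          rw [Nat.zero_add]
          rcases Nat.lt_succ_iff_lt_or_eq.mp hi with hi | rfl
          · rcases Nat.lt_succ_iff_lt_or_eq.mp hi with hi | rfl
            · have hpi' : P1 (ρ i) := by rw [hτle i (by omega)] at hpi; exact hpi
              rw [hτle i (by omega), hτle (i + 1) (by omega)]
              exact (hc i hi hpi').symm
            · have hpi' : P1 (ρ i) := by rw [hτle i le_rfl] at hpi; exact hpi
              rw [hτle i le_rfl, hτp1]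
              exact (hcend hpi').symm
          · rw [hτp1, hτp2]
            exact hw.symm)
        (by
          intro b hb
          rw [Nat.zero_add, hτp2] at hb
          exact perE_no_two hb)
      have hmem' : τ i = Sum.inr 1 := hmem
      rcases Nat.lt_or_ge i (p + 1) with h | h
      · rw [hτle i (by omega)] at hmem'; exact Sum.inl_ne_inr hmem'
      · rcases eq_or_lt_of_le h with h' | h'
        · rw [← h', hτp1] at hmem'
          exact absurd (Sum.inr.inj hmem') (by decide)
        · have hi2 : i = p + 1 + 1 := by omega
          rw [hi2, hτp2] at hmem'
          exact absurd (Sum.inr.inj hmem') (by decide)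
    · -- exit directly to ⊥
      subst he
      obtain ⟨i, hip, hmem⟩ := hσ'3 τ (p + 1) hτ0
        (by
          intro i hi
          rw [Nat.zero_add]
          rcases Nat.lt_succ_iff_lt_or_eq.mp hi with hi | rfl
          · rw [hτle i (by omega), hτle (i + 1) (by omega)]
            exact hE i hi
          · rw [hτle i le_rfl, hτp1]
            exact hend)
        (by
          intro i hi hpi
          rw [Nat.zero_add]
          rcases Nat.lt_succ_iff_lt_or_eq.mp hi with hi | rfl
          · have hpi' : P1 (ρ i) := by rw [hτle i (by omega)] at hpi; exact hpi
            rw [hτle i (by omega), hτle (i + 1) (by omega)]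
            exact (hc i hi hpi').symm
          · have hpi' : P1 (ρ i) := by rw [hτle i le_rfl] at hpi; exact hpi
            rw [hτle i le_rfl, hτp1]
            exact (hcend hpi').symm)
        (by
          intro b hb
          rw [Nat.zero_add, hτp1] at hb
          exact perE_no_two hb)
      have hmem' : τ i = Sum.inr 1 := hmem
      rcases Nat.lt_or_ge i (p + 1) with h | h
      · rw [hτle i (by omega)] at hmem'; exact Sum.inl_ne_inr hmem'
      · have hi1 : i = p + 1 := by omega
        rw [hi1, hτp1] at hmem'
        exact absurd (Sum.inr.inj hmem') (by decide)
  -- strategy agreement along consistent prefixes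
  have hC1 : ∀ (ρ : ℕ → V) (m : ℕ), ρ 0 = u → m ≤ T →
      (∀ i < m, Es (ρ i) (ρ (i + 1))) →
      (∀ i < m, P1 (ρ i) → ρ (i + 1) = bwdStrat Es T σ' u (ρ i) i) →
      ∀ j, j < m → P1 (ρ j) → σ' (Sum.inl (ρ j)) j = Sum.inl (ρ (j + 1)) := by
    intro ρ m h0 hmT hE hc j
    induction j using Nat.strong_induction_on with
    | _ j ih =>
      intro hj hpj
      have hedges : ∀ i < j, perE Es P1 v T i (Sum.inl (ρ i)) (Sum.inl (ρ (i + 1))) := by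
        intro i hi
        refine perE_ll.mpr ⟨hE i (by omega), ?_⟩
        by_cases hp : P1 (ρ i)
        · exact Or.inl ⟨hp, by rw [Nat.mod_eq_of_lt (by omega)]; omega⟩
        · exact Or.inr hp
      have hconsS : ∀ i < j, P1 (ρ i) → σ' (Sum.inl (ρ i)) i = Sum.inl (ρ (i + 1)) :=
        fun i hi hp => ih i hi (by omega) hp
      cases hh : σ' (Sum.inl (ρ j)) j with
      | inl w =>
        have hcj := hc j hj hpj
        rw [bwdStrat_eq, dif_pos (⟨ρ (j + 1), hE j hj⟩ : ∃ w', Es (ρ j) w'),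
          if_pos (show j < T by omega)] at hcj
        simp only [hh] at hcj
        exact congrArg Sum.inl hcj.symm
      | inr jj =>
        exfalso
        have hvalj := hval (ρ j) j hpj
        rw [hh] at hvalj
        refine hτgen ρ j jj h0 hedges hconsS hvalj (fun _ => hh) ?_
        intro _
        rw [Nat.mod_eq_of_lt (show j + 1 < T + 1 by omega)]
        omega
  -- every consistent prefix of length T ends at v
  have hC : ∀ ρ : ℕ → V, ρ 0 = u →
      (∀ i < T, Es (ρ i) (ρ (i + 1))) →
      (∀ i < T, P1 (ρ i) → ρ (i + 1) = bwdStrat Es T σ' u (ρ i) i) → ρ T = v := by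
    intro ρ h0 hE hc
    by_contra hne
    have hedges : ∀ i < T, perE Es P1 v T i (Sum.inl (ρ i)) (Sum.inl (ρ (i + 1))) := by
      intro i hi
      refine perE_ll.mpr ⟨hE i hi, ?_⟩
      by_cases hp : P1 (ρ i)
      · exact Or.inl ⟨hp, by rw [Nat.mod_eq_of_lt (by omega)]; omega⟩
      · exact Or.inr hp
    have hconsS := hC1 ρ T h0 le_rfl hE hc
    by_cases hp : P1 (ρ T)
    · have hvalT := hval (ρ T) T hp
      cases hh : σ' (Sum.inl (ρ T)) T with
      | inl w =>
        rw [hh] at hvalT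
        rcases (perE_ll.mp hvalT).2 with ⟨_, hlt⟩ | hnp
        · rw [mod_self_eq] at hlt; omega
        · exact hnp hp
      | inr jj =>
        rw [hh] at hvalT
        rcases perE_lr.mp hvalT with ⟨hjv, _⟩ | ⟨hjj2, _⟩
        · exact hne hjv
        · subst hjj2
          exact hτgen ρ T 2 h0 hedges hconsS hvalT (fun _ => hh)
            (fun h => absurd h (by decide))
    · exact hτgen ρ T 2 h0 hedges hconsS
        (perE_lr.mpr (Or.inr ⟨rfl, Or.inr ⟨hp, mod_self_eq⟩⟩))
        (fun hph => absurd hph hp) (fun h => absurd h (by decide))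
  refine ⟨bwdStrat Es T σ' u, cond1, ?_, ?_⟩
  · intro ρ h0 hE hc
    exact hC ρ h0 (fun i _ => hE i) (fun i _ => hc i)
  · intro ρ n h0 hE hc hstuck
    have hTn : T ≤ n := by
      by_contra hn
      push_neg at hn
      have hedges : ∀ i < n, perE Es P1 v T i (Sum.inl (ρ i)) (Sum.inl (ρ (i + 1))) := by
        intro i hi
        refine perE_ll.mpr ⟨hE i hi, ?_⟩
        by_cases hp : P1 (ρ i)
        · exact Or.inl ⟨hp, by rw [Nat.mod_eq_of_lt (by omega)]; omega⟩
        · exact Or.inr hp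
      have hconsS := hC1 ρ n h0 (le_of_lt hn) hE hc
      by_cases hp : P1 (ρ n)
      · have hvaln := hval (ρ n) n hp
        cases hh : σ' (Sum.inl (ρ n)) n with
        | inl w =>
          rw [hh] at hvaln
          exact hstuck w (perE_ll.mp hvaln).1
        | inr jj =>
          rw [hh] at hvaln
          refine hτgen ρ n jj h0 hedges hconsS hvaln (fun _ => hh) ?_
          intro _
          rw [Nat.mod_eq_of_lt (show n + 1 < T + 1 by omega)]
          omega
      · refine hτstuck ρ n h0 hedges hconsS ?_
        rintro (w | j) hb
        · exact hstuck w (perE_ll.mp hb).1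
        · rcases perE_lr.mp hb with ⟨hnv, _⟩ | ⟨_, hCc⟩
          · exact hp (show P1 (ρ n) by rw [hnv]; exact hv)
          · rcases hCc with ⟨hp1, _⟩ | ⟨_, hmod⟩
            · exact hp hp1
            · rw [Nat.mod_eq_of_lt (show n < T + 1 by omega)] at hmod
              omega
    exact ⟨hTn, hC ρ h0 (fun i hi => hE i (by omega)) (fun i hi => hc i (by omega))⟩

lemma part1 (a b : V ⊕ Fin 3) (x : ℕ) :
    perE Es P1 v T x a b ↔ perE Es P1 v T (x + (T + 1)) a b := by
  rcases a with s | j <;> rcases b with t | j' <;>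
    simp [perE, Nat.add_mod_right]

lemma part2 (hv : P1 v) (a b : V ⊕ Fin 3) (x : ℕ) :
    (perP1 P1 a → (perE Es P1 v T (min (x + 1) T) a b → perE Es P1 v T (min x T) a b)) ∧
    (¬ perP1 P1 a → (perE Es P1 v T (min x T) a b → perE Es P1 v T (min (x + 1) T) a b)) := by
  have hm : ∀ y : ℕ, min y T % (T + 1) = min y T :=
    fun y => Nat.mod_eq_of_lt (Nat.lt_succ_of_le (min_le_right _ _))
  constructor
  · intro hP1 h
    rcases a with s | j
    · rcases b with t | j'
      · rw [perE_ll] at h ⊢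
        refine ⟨h.1, ?_⟩
        rcases h.2 with ⟨hp, hlt⟩ | hp
        · rw [hm] at hlt ⊢
          left
          refine ⟨hp, lt_of_le_of_lt (min_le_min_right T (Nat.le_succ x)) hlt⟩
        · exact Or.inr hp
      · rw [perE_lr] at h ⊢
        rcases h with h | ⟨hj, h⟩
        · exact Or.inl h
        · rcases h with h | ⟨hp, _⟩
          · exact Or.inr ⟨hj, Or.inl h⟩
          · exact absurd hP1 hp
    · rcases b with t | j'
      · exact absurd h perE_rl
      · rw [perE_rr] at h ⊢
        refine ⟨h.1, ?_⟩
        rcases h.2 with h2 | ⟨h1, h0⟩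
        · exact Or.inl h2
        · rw [hm] at h0
          have hT : T = 0 := by
            rcases Nat.min_eq_zero_iff.mp h0 with h | h
            · omega
            · exact h
          refine Or.inr ⟨h1, ?_⟩
          rw [hm, hT, Nat.min_zero]
  · intro hP2 h
    rcases a with s | j
    · have hp : ¬ P1 s := hP2
      rcases b with t | j'
      · rw [perE_ll] at h ⊢
        exact ⟨h.1, Or.inr hp⟩
      · rw [perE_lr] at h ⊢
        rcases h with ⟨hsv, _⟩ | ⟨hj, h⟩
        · exact absurd (hsv ▸ hv) hp
        · rcases h with ⟨h1, _⟩ | ⟨h1, hmod⟩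
          · exact absurd h1 hp
          · rw [hm] at hmod
            refine Or.inr ⟨hj, Or.inr ⟨h1, ?_⟩⟩
            rw [hm]
            omega
    · exact absurd trivial hP2

end Reduction

/-- Correctness of the reduction from punctual reachability games to periodically declining
temporal reachability games: the edge relation of `G'` is `K`-periodic with `K = T+1`, the
game restricted to one period (frozen from the end of the first period onwards) is
declining, and for every `u ∈ V`, Player 1 wins the temporal reachability game on `G'`
with target set `{⊤}` from `(u, 0)` iff she wins the punctual reachability game on `G`
with target vertex `v` and target time `T` from `u`. -/
theorem punctual_to_periodically_declining_reduction
    {V : Type*} (Es : V → V → Prop) (P1 : V → Prop) (v : V)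
    (hv : P1 v) (T : ℕ) :
    (∀ (a b : V ⊕ Fin 3) (x : ℕ),
        perE Es P1 v T x a b ↔ perE Es P1 v T (x + (T + 1)) a b) ∧
    (∀ (a b : V ⊕ Fin 3) (x : ℕ),
        (perP1 P1 a → (perE Es P1 v T (min (x + 1) T) a b → perE Es P1 v T (min x T) a b)) ∧
        (¬ perP1 P1 a → (perE Es P1 v T (min x T) a b → perE Es P1 v T (min (x + 1) T) a b))) ∧
    (∀ u : V,
      P1WinsReach (perE Es P1 v T) (perP1 P1) {Sum.inr (1 : Fin 3)} (Sum.inl u) 0 ↔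
      PunctualWins Es P1 v T u) := by
  exact ⟨fun a b x => part1 a b x, fun a b x => part2 hv a b x,
    fun u => ⟨bwd hv u, fwd hv u⟩⟩
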